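/- Setting ℏ = 1 and z_1 = ··· = z_n = 0, the element S_1^{(n)}(u) = Σ_{i=1}^n (u + σ_{i,n})(u + σ_{i,n-1})···(u + σ_{i,i+1}) u^{i-1} of C[S_n][u] equals n·u^{n-1} + Σ_{k=2}^n G_k^{(n)} u^{n-k}, where G_k^{(n)} = Σ_{1 ≤ i_1 < ··· < i_k ≤ n} σ_{i_1,i_2} σ_{i_2,i_3} ··· σ_{i_{k-1},i_k} is the sum of all increasing k-cycles. -/

import Mathlib

open Polynomial Finset in
theorem aux_prod_X_add_C {R : Type*} [Ring R] {α : Type*} [DecidableEq α] (f : α → R) :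
    ∀ (l : List α), l.Nodup →
    ((l.map (fun a => X + C (f a))).prod)
      = ∑ T ∈ l.toFinset.powerset,
          C (((l.filter (· ∈ T)).map f).prod) * X ^ (l.length - T.card) := by
  intro l
  induction l with
  | nil => simp
  | cons a l ih =>
    intro hnd
    have hal : a ∉ l := (List.nodup_cons.1 hnd).1
    have hnd' := (List.nodup_cons.1 hnd).2
    have hat : a ∉ l.toFinset := by simpa using hal
    rw [List.map_cons, List.prod_cons, ih hnd', List.toFinset_cons,
      Finset.sum_powerset_insert hat, add_mul, Finset.mul_sum, Finset.mul_sum]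
    congr 1
    · apply Finset.sum_congr rfl
      intro T hT
      have hTsub := Finset.mem_powerset.1 hT
      have hcard : T.card ≤ l.length :=
        le_trans (Finset.card_le_card hTsub) l.toFinset_card_le
      have haT : a ∉ T := fun h => hat (hTsub h)
      have hfil : (a :: l).filter (· ∈ T) = l.filter (· ∈ T) := by
        rw [List.filter_cons]
        simp [haT]
      rw [hfil, List.length_cons]
      rw [show l.length + 1 - T.card = (l.length - T.card) + 1 by omega]
      rw [pow_succ]
      rw [X_mul, mul_assoc]
    · apply Finset.sum_congr rfl
      intro T hT
      have hTsub := Finset.mem_powerset.1 hT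
      have hcard : T.card ≤ l.length :=
        le_trans (Finset.card_le_card hTsub) l.toFinset_card_le
      have haT : a ∉ T := fun h => hat (hTsub h)
      have hfil : (a :: l).filter (· ∈ insert a T) = a :: l.filter (· ∈ T) := by
        rw [List.filter_cons]
        rw [if_pos (by simp)]
        congr 1
        apply List.filter_congr
        intro x hx
        have : x ≠ a := fun h => hal (h ▸ hx)
        simp [Finset.mem_insert, this]
      rw [hfil, List.length_cons, Finset.card_insert_of_notMem haT]
      simp only [List.map_cons, List.prod_cons, map_mul]
      rw [show l.length + 1 - (T.card + 1) = l.length - T.card from by omega, mul_assoc]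

open Equiv in
theorem aux_swap_prod {α : Type*} [DecidableEq α] [LinearOrder α] :
    ∀ (l : List α) (i : α), List.Pairwise (· < ·) (i :: l) →
    (l.reverse.map (fun a => Equiv.swap i a)).prod
      = (((i :: l).zip l).map (fun p => Equiv.swap p.1 p.2)).prod := by
  intro l
  induction l with
  | nil => simp
  | cons a l ih =>
    intro i hs
    have hia : i < a := (List.pairwise_cons.1 hs).1 a List.mem_cons_self
    have hs' : List.Pairwise (· < ·) (a :: l) := (List.pairwise_cons.1 hs).2
    have key : ∀ x ∈ l, Equiv.swap i x = Equiv.swap i a * Equiv.swap a x * Equiv.swap i a := by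
      intro x hx
      have hax : a < x := (List.pairwise_cons.1 hs').1 x hx
      have h1 : Equiv.swap i a a = i := Equiv.swap_apply_right i a
      have h2 : Equiv.swap i a x = x :=
        Equiv.swap_apply_of_ne_of_ne (by exact ne_of_gt (lt_trans hia hax)) (ne_of_gt hax)
      calc Equiv.swap i x = Equiv.swap ((Equiv.swap i a) a) ((Equiv.swap i a) x) := by
              rw [h1, h2]
        _ = Equiv.swap i a * Equiv.swap a x * (Equiv.swap i a)⁻¹ := by
              rw [Equiv.swap_apply_apply]
        _ = Equiv.swap i a * Equiv.swap a x * Equiv.swap i a := by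
              rw [Equiv.swap_inv]
    have conj : (l.reverse.map (fun x => Equiv.swap i x)).prod
        = Equiv.swap i a * (l.reverse.map (fun x => Equiv.swap a x)).prod * Equiv.swap i a := by
      have : (l.reverse.map (fun x => Equiv.swap i x))
          = (l.reverse.map (fun x => (MulAut.conj (Equiv.swap i a)) (Equiv.swap a x))) := by
        apply List.map_congr_left
        intro x hx
        rw [List.mem_reverse] at hx
        simp [MulAut.conj_apply, Equiv.swap_inv, key x hx, mul_assoc]
      rw [this,
        show (l.reverse.map (fun x => (MulAut.conj (Equiv.swap i a)) (Equiv.swap a x)))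
          = ((l.reverse.map (fun x => Equiv.swap a x)).map (MulAut.conj (Equiv.swap i a))) from
          (List.map_map).symm,
        ← map_list_prod (MulAut.conj (Equiv.swap i a))]
      simp [MulAut.conj_apply, Equiv.swap_inv, mul_assoc]
    rw [List.reverse_cons, List.map_append, List.prod_append, List.map_singleton,
      List.prod_singleton, conj, mul_assoc, Equiv.swap_mul_self, mul_one]
    rw [ih a hs']
    simp [List.zip_cons_cons]

open Finset in
theorem aux_sort_insert {α : Type*} [LinearOrder α] [DecidableEq α] (i : α) (T : Finset α)
    (h : ∀ x ∈ T, i < x) : (insert i T).sort (· ≤ ·) = i :: T.sort (· ≤ ·) := by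
  refine List.Perm.eq_of_pairwise' (r := (· ≤ ·)) ?_ ?_ ?_
  rotate_right
  · apply (List.perm_ext_iff_of_nodup (Finset.sort_nodup _ _) ?_).2
    · intro x
      simp [Finset.mem_sort, Finset.mem_insert]
    · refine List.nodup_cons.2 ⟨fun hi => ?_, Finset.sort_nodup _ _⟩
      exact absurd rfl (ne_of_gt (h i ((Finset.mem_sort _).1 hi)))
  · exact Finset.pairwise_sort _ _
  · refine List.pairwise_cons.2 ⟨fun b hb => le_of_lt (h b ((Finset.mem_sort _).1 hb)), Finset.pairwise_sort _ _⟩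

open Finset in
theorem aux_filter_eq_sort_reverse (n : ℕ) (i : Fin n) (T : Finset (Fin n))
    (hT : ∀ x ∈ T, i < x) :
    (((List.finRange n).reverse.filter (fun a => i < a)).filter (· ∈ T))
      = (T.sort (· ≤ ·)).reverse := by
  refine List.Perm.eq_of_pairwise' (r := (· > ·)) ?_ ?_ ?_
  rotate_right
  · apply (List.perm_ext_iff_of_nodup ?_ ?_).2
    · intro x
      simp only [List.mem_filter, List.mem_reverse, List.mem_finRange, true_and,
        Finset.mem_sort, decide_eq_true_eq]
      constructor
      · rintro ⟨-, hx⟩; exact hx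
      · intro hx; exact ⟨by simpa using hT x hx, by simpa using hx⟩
    · exact ((List.nodup_reverse.2 (List.nodup_finRange n)).filter _).filter _
    · exact List.nodup_reverse.2 (Finset.sort_nodup _ _)
  · exact ((List.pairwise_reverse.2 (by simpa using List.pairwise_lt_finRange n)).filter _).filter _
  · exact List.pairwise_reverse.2 (by simpa using ((Finset.sortedLT_sort T).pairwise))

open Polynomial Finset Equiv

variable {n : ℕ}

noncomputable def Fterm (n : ℕ) (s : Finset (Fin n)) :
    Polynomial (MonoidAlgebra ℂ (Equiv.Perm (Fin n))) :=
  Polynomial.C (MonoidAlgebra.of ℂ (Equiv.Perm (Fin n))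
      ((((s.sort (· ≤ ·)).zip (s.sort (· ≤ ·)).tail).map
        (fun p => Equiv.swap p.1 p.2)).prod))
    * Polynomial.X ^ (n - s.card)

theorem aux_lhs (i : Fin n) :
    (((List.finRange n).reverse.filter (fun a => i < a)).map
        (fun a => Polynomial.X
          + Polynomial.C (MonoidAlgebra.of ℂ (Equiv.Perm (Fin n)) (Equiv.swap i a)))).prod
      * Polynomial.X ^ (i : ℕ)
    = ∑ T ∈ (Finset.Ioi i).powerset, Fterm n (insert i T) := by
  set l := (List.finRange n).reverse.filter (fun a => i < a) with hl
  have hnd : l.Nodup := (List.nodup_reverse.2 (List.nodup_finRange n)).filter _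
  have htf : l.toFinset = Finset.Ioi i := by
    ext x
    simp [hl, Finset.mem_Ioi, List.mem_filter]
  have hlen : l.length = n - 1 - (i : ℕ) := by
    rw [← List.toFinset_card_of_nodup hnd, htf]
    exact Fin.card_Ioi i
  rw [aux_prod_X_add_C _ l hnd, htf, Finset.sum_mul]
  apply Finset.sum_congr rfl
  intro T hT
  have hTsub : T ⊆ Finset.Ioi i := Finset.mem_powerset.1 hT
  have hTi : ∀ x ∈ T, i < x := fun x hx => Finset.mem_Ioi.1 (hTsub hx)
  have hiT : i ∉ T := fun h => lt_irrefl i (hTi i h)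
  have hcard : T.card ≤ n - 1 - (i : ℕ) := by
    have := Finset.card_le_card hTsub
    rwa [Fin.card_Ioi i] at this
  have hfil : l.filter (· ∈ T) = (T.sort (· ≤ ·)).reverse :=
    aux_filter_eq_sort_reverse n i T hTi
  have hsortins : (insert i T).sort (· ≤ ·) = i :: T.sort (· ≤ ·) :=
    aux_sort_insert i T hTi
  have hsorted : List.Pairwise (· < ·) (i :: T.sort (· ≤ ·)) :=
    List.pairwise_cons.2 ⟨fun b hb => hTi b ((Finset.mem_sort _).1 hb),
      (Finset.sortedLT_sort T).pairwise⟩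
  have hswap := aux_swap_prod (T.sort (· ≤ ·)) i hsorted
  have hofprod : (((T.sort (· ≤ ·)).reverse).map
      (fun a => MonoidAlgebra.of ℂ (Equiv.Perm (Fin n)) (Equiv.swap i a))).prod
      = MonoidAlgebra.of ℂ (Equiv.Perm (Fin n))
          ((((T.sort (· ≤ ·)).reverse).map (fun a => Equiv.swap i a)).prod) := by
    rw [show (((T.sort (· ≤ ·)).reverse).map
        (fun a => MonoidAlgebra.of ℂ (Equiv.Perm (Fin n)) (Equiv.swap i a)))
        = ((((T.sort (· ≤ ·)).reverse).map (fun a => Equiv.swap i a)).map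
            (MonoidAlgebra.of ℂ (Equiv.Perm (Fin n)))) from (List.map_map).symm,
      ← map_list_prod (MonoidAlgebra.of ℂ (Equiv.Perm (Fin n)))]
  rw [hfil, hofprod, hswap]
  unfold Fterm
  rw [hsortins, Finset.card_insert_of_notMem hiT, mul_assoc, ← pow_add]
  congr 2
  next =>
    have hi : (i : ℕ) < n := i.isLt
    omega

theorem aux_bij :
    ∑ x ∈ (Finset.univ : Finset (Fin n)).sigma (fun i => (Finset.Ioi i).powerset),
        Fterm n (insert x.1 x.2)
    = ∑ s ∈ (Finset.univ : Finset (Finset (Fin n))).filter (fun s => s.Nonempty),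
        Fterm n s := by
  refine Finset.sum_bij'
    (fun x _ => insert x.1 x.2)
    (fun (s : Finset (Fin n)) (hs : s ∈ (Finset.univ : Finset (Finset (Fin n))).filter (fun s => s.Nonempty)) => (⟨s.min' ((Finset.mem_filter.1 hs).2),
      s.erase (s.min' ((Finset.mem_filter.1 hs).2))⟩ : (_ : Fin n) × Finset (Fin n))) ?_ ?_ ?_ ?_ ?_
  · intro x hx
    simp [Finset.insert_nonempty]
  · intro s hs
    have hne : s.Nonempty := (Finset.mem_filter.1 hs).2
    rw [Finset.mem_sigma]
    refine ⟨Finset.mem_univ _, Finset.mem_powerset.2 ?_⟩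
    intro x hx
    rw [Finset.mem_Ioi]
    exact lt_of_le_of_ne (Finset.min'_le s x (Finset.mem_of_mem_erase hx))
      (Ne.symm (Finset.ne_of_mem_erase hx))
  · rintro ⟨i, T⟩ hx
    rw [Finset.mem_sigma] at hx
    have hTsub : T ⊆ Finset.Ioi i := Finset.mem_powerset.1 hx.2
    have hiT : i ∉ T := fun h => lt_irrefl i (Finset.mem_Ioi.1 (hTsub h))
    have hmin : (insert i T).min' (Finset.insert_nonempty _ _) = i := by
      apply le_antisymm (Finset.min'_le _ _ (Finset.mem_insert_self _ _))
      apply Finset.le_min'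
      intro y hy
      rcases Finset.mem_insert.1 hy with h | h
      · exact le_of_eq h.symm
      · exact le_of_lt (Finset.mem_Ioi.1 (hTsub h))
    have herase : (insert i T).erase i = T := Finset.erase_insert hiT
    refine Sigma.ext hmin (heq_of_eq ?_)
    rw [show (insert i T).min'
        (Finset.mem_filter.1 (by simp [Finset.insert_nonempty] :
          insert i T ∈ (Finset.univ : Finset (Finset (Fin n))).filter
            (fun s => s.Nonempty))).2 = i from hmin]
    exact herase
  · intro s hs
    exact Finset.insert_erase (Finset.min'_mem _ ((Finset.mem_filter.1 hs).2))
  · intro x hx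
    rfl

theorem aux_rhs :
    ∑ s ∈ (Finset.univ : Finset (Finset (Fin n))).filter (fun s => s.Nonempty),
        Fterm n s
    = (n : ℂ) • Polynomial.X ^ (n - 1)
      + ∑ s : Finset (Fin n),
          if 2 ≤ s.card then
            Polynomial.C (MonoidAlgebra.of ℂ (Equiv.Perm (Fin n))
                ((((s.sort (· ≤ ·)).zip (s.sort (· ≤ ·)).tail).map
                  (fun p => Equiv.swap p.1 p.2)).prod))
              * Polynomial.X ^ (n - s.card)
          else 0 := by
  rw [Finset.sum_filter]
  have key : ∀ s : Finset (Fin n),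
      (if s.Nonempty then Fterm n s else 0)
      = (if s.card = 1 then Polynomial.X ^ (n - 1) else 0)
        + (if 2 ≤ s.card then Fterm n s else 0) := by
    intro s
    rcases Nat.lt_or_ge s.card 1 with h | h
    · have h0 : s.card = 0 := by omega
      have he : s = ∅ := Finset.card_eq_zero.1 h0
      subst he
      simp
    rcases eq_or_lt_of_le h with h1 | h2
    · have h1 : s.card = 1 := h1.symm
      obtain ⟨a, rfl⟩ := Finset.card_eq_one.1 h1
      rw [if_pos (Finset.singleton_nonempty a), if_pos (by simp),
        if_neg (by simp), add_zero]
      unfold Fterm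
      simp only [Finset.card_singleton, Finset.sort_singleton, List.tail_cons,
        List.zip_nil_right, List.map_nil, List.prod_nil, map_one, Polynomial.C_1, one_mul]
    · have hne : s.Nonempty := Finset.card_pos.1 (by omega)
      rw [if_pos hne, if_neg (by omega), if_pos (by omega), zero_add]
  rw [Finset.sum_congr rfl (fun s _ => key s), Finset.sum_add_distrib]
  congr 1
  rw [← Finset.sum_filter, Finset.sum_const]
  rw [show (Finset.univ : Finset (Finset (Fin n))).filter (fun s => s.card = 1)
      = Finset.powersetCard 1 (Finset.univ : Finset (Fin n)) by
    rw [Finset.powersetCard_eq_filter, Finset.powerset_univ]]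
  rw [Finset.card_powersetCard, Finset.card_univ, Fintype.card_fin, Nat.choose_one_right]
  exact (Nat.cast_smul_eq_nsmul ℂ n _).symm

/-- with `ℏ = 1` and `z_1 = ⋯ = z_n = 0`, in `ℂ[S_n][u]`,
`S_1^{(n)}(u) = Σ_{i=1}^n (u + σ_{i,n})⋯(u + σ_{i,i+1}) u^{i-1}` equals
`n u^{n-1} + Σ_{k=2}^n G_k^{(n)} u^{n-k}` where
`G_k^{(n)} = Σ_{i_1<⋯<i_k} σ_{i_1,i_2}σ_{i_2,i_3}⋯σ_{i_{k-1},i_k}` is the sum of all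
increasing `k`-cycles. Subsets `s` of cardinality `k ≥ 2` encode the tuples. -/
theorem stmt_19 (n : ℕ) :
    ∑ i : Fin n,
        (((List.finRange n).reverse.filter (fun a => i < a)).map
          (fun a => Polynomial.X
            + Polynomial.C (MonoidAlgebra.of ℂ (Equiv.Perm (Fin n)) (Equiv.swap i a)))).prod
        * Polynomial.X ^ (i : ℕ)
    = (n : ℂ) • Polynomial.X ^ (n - 1)
      + ∑ s : Finset (Fin n),
          if 2 ≤ s.card then
            Polynomial.C (MonoidAlgebra.of ℂ (Equiv.Perm (Fin n))
                ((((s.sort (· ≤ ·)).zip (s.sort (· ≤ ·)).tail).map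
                  (fun p => Equiv.swap p.1 p.2)).prod))
              * Polynomial.X ^ (n - s.card)
          else 0 := by
  rw [Finset.sum_congr rfl (fun i _ => aux_lhs i), Finset.sum_sigma', aux_bij, aux_rhs]
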